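/- Let G be a finite group of order n, M = Matrix G G ℂ with the products (ω ⋆ τ)(s,t) = Σ_{r∈G} τ(r,r) ω(s r⁻¹, t r⁻¹) and (ω • τ)(s,t) = ω(s,t) Σ_{u∈G} τ(u, t s⁻¹ u), M₀ the trace-zero matrices, and ρ ∘ τ := (1/2)(ρ ⋆ τ − τ • ρ). Define E ∈ M by E(s,t) = 2·(δ_{s,e} δ_{t,e} − 1/n), where e is the identity of G (i.e., E = 2(δ_e δ_e* − χχ*) with χ the normalized constant vector). Then E ∈ M₀ and E is a two-sided identity for ∘ on M₀: E ∘ ρ = ρ = ρ ∘ E for all ρ ∈ M₀. -/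

import Mathlib

open scoped BigOperators

/-- `(ω ⋆ τ)(s,t) = Σ_{r∈G} τ(r,r) ω(s r⁻¹, t r⁻¹)`. -/
noncomputable def starConv {G : Type*} [Group G] [Fintype G]
    (ω τ : Matrix G G ℂ) : Matrix G G ℂ :=
  Matrix.of fun s t => ∑ r : G, τ r r * ω (s * r⁻¹) (t * r⁻¹)

/-- `(ω • τ)(s,t) = ω(s,t) Σ_{u∈G} τ(u, t s⁻¹ u)`. -/
noncomputable def bulConv {G : Type*} [Group G] [Fintype G]
    (ω τ : Matrix G G ℂ) : Matrix G G ℂ :=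
  Matrix.of fun s t => ω s t * ∑ u : G, τ u (t * s⁻¹ * u)

/-- The mixed Lie-type product `ρ ∘ τ = (1/2)(ρ ⋆ τ − τ • ρ)`. -/
noncomputable def circConv {G : Type*} [Group G] [Fintype G]
    (ρ τ : Matrix G G ℂ) : Matrix G G ℂ :=
  (2 : ℂ)⁻¹ • (starConv ρ τ - bulConv τ ρ)

/-- The matrix `E = 2(δ_e δ_e* − χχ*)`, i.e.
`E(s,t) = 2 (δ_{s,e} δ_{t,e} − 1/|G|)`. -/
noncomputable def unitE (G : Type*) [Group G] [Fintype G] [DecidableEq G] :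
    Matrix G G ℂ :=
  Matrix.of fun s t =>
    (2 : ℂ) * ((if s = (1 : G) then (1 : ℂ) else 0) *
      (if t = (1 : G) then (1 : ℂ) else 0) - 1 / (Fintype.card G : ℂ))

/-- `E` has trace zero and is a two-sided identity for `∘` on the
trace-zero matrices `M₀`. -/
theorem unitE_identity {G : Type*} [Group G] [Fintype G] [DecidableEq G] :
    (unitE G).trace = 0 ∧
    ∀ ρ : Matrix G G ℂ, ρ.trace = 0 →
      circConv (unitE G) ρ = ρ ∧ circConv ρ (unitE G) = ρ := by
  have hn : (Fintype.card G : ℂ) ≠ 0 := Nat.cast_ne_zero.mpr Fintype.card_ne_zero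
  have hinv : ∀ s r : G, (s * r⁻¹ = 1) ↔ (r = s) := by
    intro s r; rw [mul_inv_eq_one]; exact eq_comm
  constructor
  · simp only [Matrix.trace, Matrix.diag, unitE, Matrix.of_apply,
      mul_sub, Finset.sum_sub_distrib, ite_mul, one_mul, zero_mul, mul_ite, mul_one, mul_zero]
    rw [Finset.sum_ite_eq' Finset.univ (1 : G)
      (fun x => if x = (1:G) then (2:ℂ) else 0)]
    simp only [Finset.mem_univ, if_true, Finset.sum_const, Finset.card_univ, nsmul_eq_mul]
    field_simp
    ring
  · intro ρ hρ
    have htr : ∑ r : G, ρ r r = 0 := hρ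
    constructor
    · ext s t
      simp only [circConv, starConv, bulConv, unitE, Matrix.smul_apply,
        Matrix.sub_apply, Matrix.of_apply, smul_eq_mul]
      have h1 : (∑ r : G, ρ r r * ((2:ℂ) * ((if s * r⁻¹ = 1 then (1:ℂ) else 0) *
          (if t * r⁻¹ = 1 then (1:ℂ) else 0) - 1 / (Fintype.card G : ℂ))))
          = (if s = t then 2 * ρ s s else 0) := by
        have key : ∀ r : G, ρ r r * ((2:ℂ) * ((if s * r⁻¹ = 1 then (1:ℂ) else 0) *
            (if t * r⁻¹ = 1 then (1:ℂ) else 0) - 1 / (Fintype.card G : ℂ)))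
            = (if r = s then (if r = t then 2 * ρ r r else 0) else 0)
              - ρ r r * (2 / (Fintype.card G : ℂ)) := by
          intro r
          simp only [hinv]
          by_cases h1 : r = s
          · rw [if_pos h1, if_pos h1]
            by_cases h2 : r = t
            · rw [if_pos h2, if_pos h2]; ring
            · rw [if_neg h2, if_neg h2]; ring
          · rw [if_neg h1, if_neg h1, zero_mul]; ring
        rw [Finset.sum_congr rfl (fun r _ => key r), Finset.sum_sub_distrib,
          ← Finset.sum_mul, htr, zero_mul, sub_zero,
          Finset.sum_ite_eq' Finset.univ s (fun r => if r = t then 2 * ρ r r else 0)]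
        simp [eq_comm]
      have h2 : (∑ u : G, (2:ℂ) * ((if u = 1 then (1:ℂ) else 0) *
          (if t * s⁻¹ * u = 1 then (1:ℂ) else 0) - 1 / (Fintype.card G : ℂ)))
          = (if s = t then 0 else -2) := by
        have key : ∀ u : G, (2:ℂ) * ((if u = 1 then (1:ℂ) else 0) *
            (if t * s⁻¹ * u = 1 then (1:ℂ) else 0) - 1 / (Fintype.card G : ℂ))
            = (if u = 1 then (if t * s⁻¹ * u = 1 then (2:ℂ) else 0) else 0)
              - 2 / (Fintype.card G : ℂ) := by
          intro u
          by_cases h1 : u = 1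
          · rw [if_pos h1, if_pos h1, one_mul]
            by_cases h2 : t * s⁻¹ * u = 1
            · rw [if_pos h2, if_pos h2]; ring
            · rw [if_neg h2, if_neg h2]; ring
          · rw [if_neg h1, if_neg h1, zero_mul]; ring
        rw [Finset.sum_congr rfl (fun u _ => key u), Finset.sum_sub_distrib,
          Finset.sum_const, Finset.card_univ,
          Finset.sum_ite_eq' Finset.univ (1 : G)
            (fun u => if t * s⁻¹ * u = 1 then (2:ℂ) else 0)]
        have hts : (t * s⁻¹ * (1:G) = 1) ↔ (s = t) := by
          rw [mul_one, mul_inv_eq_one]; exact eq_comm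
        rw [nsmul_eq_mul, mul_div_cancel₀ _ hn, if_pos (Finset.mem_univ (1:G))]
        by_cases h : s = t
        · rw [if_pos h, if_pos (hts.mpr h)]; ring
        · rw [if_neg h, if_neg (fun hc => h (hts.mp hc))]; ring
      rw [h1, h2]
      by_cases h : s = t
      · rw [if_pos h, if_pos h, ← h]; ring
      · rw [if_neg h, if_neg h]; ring
    · ext s t
      simp only [circConv, starConv, bulConv, unitE, Matrix.smul_apply,
        Matrix.sub_apply, Matrix.of_apply, smul_eq_mul]
      set T := ∑ u : G, ρ u (t * s⁻¹ * u) with hT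
      have hre : (∑ r : G, ρ (s * r⁻¹) (t * r⁻¹)) = T := by
        rw [hT]
        refine Fintype.sum_equiv ((Equiv.inv G).trans (Equiv.mulLeft s)) _ _ ?_
        intro u
        simp only [Equiv.trans_apply, Equiv.inv_apply, Equiv.coe_mulLeft]
        have e2 : t * s⁻¹ * (s * u⁻¹) = t * u⁻¹ := by group
        rw [e2]
      have h1 : (∑ r : G, (2:ℂ) * ((if r = 1 then (1:ℂ) else 0) *
          (if r = 1 then (1:ℂ) else 0) - 1 / (Fintype.card G : ℂ)) * ρ (s * r⁻¹) (t * r⁻¹))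
          = 2 * ρ s t - (2 / (Fintype.card G : ℂ)) * T := by
        have key : ∀ r : G, (2:ℂ) * ((if r = 1 then (1:ℂ) else 0) *
            (if r = 1 then (1:ℂ) else 0) - 1 / (Fintype.card G : ℂ)) * ρ (s * r⁻¹) (t * r⁻¹)
            = (if r = 1 then (2:ℂ) * ρ (s * r⁻¹) (t * r⁻¹) else 0)
              - (2 / (Fintype.card G : ℂ)) * ρ (s * r⁻¹) (t * r⁻¹) := by
          intro r
          by_cases h1 : r = 1
          · rw [if_pos h1, if_pos h1]; ring
          · rw [if_neg h1, if_neg h1]; ring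
        rw [Finset.sum_congr rfl (fun r _ => key r), Finset.sum_sub_distrib,
          Finset.sum_ite_eq' Finset.univ (1 : G)
            (fun r => (2:ℂ) * ρ (s * r⁻¹) (t * r⁻¹)), ← Finset.mul_sum, hre,
          if_pos (Finset.mem_univ (1:G))]
        simp only [inv_one, mul_one]
      rw [h1]
      have h2 : (2:ℂ) * ((if s = 1 then (1:ℂ) else 0) * (if t = 1 then (1:ℂ) else 0)
          - 1 / (Fintype.card G : ℂ)) * T
          = - (2 / (Fintype.card G : ℂ)) * T := by
        by_cases hs : s = 1
        · by_cases ht : t = 1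
          · have hT0 : T = 0 := by
              rw [hT, hs, ht]; simpa using htr
            rw [hT0]; ring
          · rw [if_pos hs, if_neg ht]; ring
        · rw [if_neg hs]; ring
      rw [h2]; ring
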